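/- The function f(u) = c · u²/ũ − d · ũ(1 + log(u/ũ)), for fixed constants c > 0, d ≥ 0 and fixed ũ > 0, is convex on (0, ∞) and attains its global minimum at u = ũ · sqrt(d/(2c)) when d > 0. -/

import Mathlib

open Real Set

theorem aux_entry_convex_and_min (c d v : ℝ) (hc : 0 < c) (hd : 0 ≤ d) (hv : 0 < v) :
    ConvexOn ℝ (Set.Ioi (0 : ℝ))
      (fun u : ℝ => c * u ^ 2 / v - d * v * (1 + Real.log (u / v))) ∧
    (0 < d → ∀ u ∈ Set.Ioi (0 : ℝ),
      c * (v * Real.sqrt (d / (2 * c))) ^ 2 / v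
        - d * v * (1 + Real.log ((v * Real.sqrt (d / (2 * c))) / v))
      ≤ c * u ^ 2 / v - d * v * (1 + Real.log (u / v))) := by
  constructor
  · -- convexity
    have h1 : ConvexOn ℝ (Set.Ioi (0 : ℝ)) (fun u : ℝ => (c / v) • u ^ 2) :=
      ((convexOn_pow 2).subset (fun x hx => le_of_lt hx) (convex_Ioi 0)).smul
        (by positivity)
    have h2 : ConvexOn ℝ (Set.Ioi (0 : ℝ)) (fun u : ℝ => -((d * v) • Real.log u)) :=
      ((strictConcaveOn_log_Ioi.concaveOn).smul (by positivity)).neg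
    have h3 : ConvexOn ℝ (Set.Ioi (0 : ℝ))
        (fun u : ℝ => (c / v) • u ^ 2 + -((d * v) • Real.log u) + (d * v * (Real.log v - 1))) :=
      (h1.add h2).add_const _
    refine h3.congr (fun u hu => ?_)
    have hu0 : (0 : ℝ) < u := hu
    simp only [smul_eq_mul]
    rw [Real.log_div hu0.ne' hv.ne']
    ring
  · -- minimum
    intro hdpos u hu
    have hu0 : (0 : ℝ) < u := hu
    set s := Real.sqrt (d / (2 * c)) with hs
    have hs0 : 0 < s := Real.sqrt_pos.2 (by positivity)
    have hs2 : s ^ 2 = d / (2 * c) := Real.sq_sqrt (by positivity)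
    set w := v * s with hw
    have hw0 : 0 < w := by positivity
    have hw2 : 2 * c * w ^ 2 = d * v ^ 2 := by
      rw [hw, mul_pow, hs2]; field_simp
    have hlog : Real.log (u / w) ≤ u / w - 1 := Real.log_le_sub_one_of_pos (by positivity)
    have hlogsplit : Real.log (u / v) = Real.log (u / w) + Real.log (w / v) := by
      rw [Real.log_div hu0.ne' hw0.ne', Real.log_div hw0.ne' hv.ne',
        Real.log_div hu0.ne' hv.ne']
      ring
    rw [hlogsplit]
    have key : d * v * Real.log (u / w) ≤ c * u ^ 2 / v - c * w ^ 2 / v := by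
      have h1 : d * v * Real.log (u / w) ≤ d * v * (u / w - 1) := by
        apply mul_le_mul_of_nonneg_left hlog (by positivity)
      have h2 : d * v * (u / w - 1) ≤ c * u ^ 2 / v - c * w ^ 2 / v := by
        rw [div_sub_div_same, le_div_iff₀ hv]
        have hkey : 2 * w * (u - w) ≤ u ^ 2 - w ^ 2 := by nlinarith [sq_nonneg (u - w)]
        have hne : w ≠ 0 := hw0.ne'
        field_simp
        have heq : d * v * (u - w) * v = 2 * c * w ^ 2 * (u - w) := by
          have hcs : 2 * c * s ^ 2 = d := by rw [hs2]; field_simp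
          linear_combination (- (v ^ 2 * (u - v * s))) * hcs
        nlinarith [mul_le_mul_of_nonneg_left hkey (mul_pos hc hw0).le]
      linarith
    linarith
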